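/- Let ψ be a zero-closure operator on X satisfying the anti-exchange property, and let ρ be a closure operator on X whose closed sets are exactly the unions of (possibly singleton) up-directed families of ψ-closed sets. Then ρ also satisfies the anti-exchange property. -/
import Mathlib


/-- φ is a closure operator: extensive, monotone, idempotent. -/
def IsClosureOp {X : Type*} (φ : Set X → Set X) : Prop :=
  (∀ A, A ⊆ φ A) ∧ (∀ A B, A ⊆ B → φ A ⊆ φ B) ∧ (∀ A, φ (φ A) = φ A)

/-- φ is algebraic (finitary): the closure of a set is the union of closures of its
finite subsets. -/
def IsAlgebraicOp {X : Type*} (φ : Set X → Set X) : Prop :=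
  ∀ A, φ A = ⋃₀ {T | ∃ B, B ⊆ A ∧ B.Finite ∧ T = φ B}

/-- The anti-exchange property. -/
def AntiExchange {X : Type*} (φ : Set X → Set X) : Prop :=
  ∀ (x y : X) (A : Set X), x ≠ y → φ A = A → x ∉ A →
    x ∈ φ (A ∪ {y}) → y ∉ φ (A ∪ {x})

/-- A convex geometry: a zero-closure operator with the anti-exchange property. -/
def IsConvexGeometry {X : Type*} (φ : Set X → Set X) : Prop :=
  IsClosureOp φ ∧ φ ∅ = ∅ ∧ AntiExchange φ

/-- An algebraic convex geometry. -/
def IsAlgConvexGeometry {X : Type*} (φ : Set X → Set X) : Prop :=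
  IsClosureOp φ ∧ IsAlgebraicOp φ ∧ φ ∅ = ∅ ∧ AntiExchange φ

/-- An algebraic subset of Pow X : closed under arbitrary intersections
(with ⋂₀ ∅ = X) and under unions of nonempty up-directed subfamilies. -/
def IsAlgSubset {X : Type*} (F : Set (Set X)) : Prop :=
  (∀ S ⊆ F, ⋂₀ S ∈ F) ∧
  (∀ S ⊆ F, S.Nonempty → (∀ A ∈ S, ∀ B ∈ S, ∃ C ∈ S, A ∪ B ⊆ C) → ⋃₀ S ∈ F)

/-- A maximal chain in the lattice of φ-closed sets. -/
def IsMaxChainOfClosed {X : Type*} (φ : Set X → Set X) (C : Set (Set X)) : Prop :=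
  C ⊆ {Y | φ Y = Y} ∧ IsChain (· ⊆ ·) C ∧
  ∀ T, φ T = T → (∀ A ∈ C, T ⊆ A ∨ A ⊆ T) → T ∈ C

/-- If ψ is a zero-closure operator with the anti-exchange property, and ρ is a
closure operator whose closed sets are exactly the unions of nonempty up-directed
families of ψ-closed sets, then ρ satisfies the anti-exchange property. -/
theorem stmt7 {X : Type*} (ψ ρ : Set X → Set X)
    (hψclo : IsClosureOp ψ) (hψzero : ψ ∅ = ∅) (hψaep : AntiExchange ψ)
    (hρclo : IsClosureOp ρ)
    (hclosed : ∀ A : Set X, ρ A = A ↔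
      ∃ S : Set (Set X), S.Nonempty ∧ (∀ B ∈ S, ψ B = B) ∧
        (∀ B ∈ S, ∀ B' ∈ S, ∃ D ∈ S, B ∪ B' ⊆ D) ∧ A = ⋃₀ S) :
    AntiExchange ρ := by
  intro x y A hxy hA hxA hxρ hyρ
  obtain ⟨hψext, hψmono, hψidem⟩ := hψclo
  obtain ⟨hρext, hρmono, hρidem⟩ := hρclo
  obtain ⟨S, hSne, hScl, hSdir, hAS⟩ := (hclosed A).mp hA
  -- key: for any z, ρ (A ∪ {z}) ⊆ ⋃₀ {ψ (B ∪ {z}) | B ∈ S}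
  have key : ∀ z : X, ρ (A ∪ {z}) ⊆ ⋃₀ {T | ∃ B ∈ S, T = ψ (B ∪ {z})} := by
    intro z
    set S' : Set (Set X) := {T | ∃ B ∈ S, T = ψ (B ∪ {z})} with hS'
    have hU : ρ (⋃₀ S') = ⋃₀ S' := by
      apply (hclosed _).mpr
      refine ⟨S', ?_, ?_, ?_, rfl⟩
      · obtain ⟨B, hB⟩ := hSne
        exact ⟨ψ (B ∪ {z}), B, hB, rfl⟩
      · rintro T ⟨B, hB, rfl⟩; exact hψidem _
      · rintro T ⟨B, hB, rfl⟩ T' ⟨B', hB', rfl⟩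
        obtain ⟨D, hD, hBD⟩ := hSdir B hB B' hB'
        refine ⟨ψ (D ∪ {z}), ⟨D, hD, rfl⟩, ?_⟩
        apply Set.union_subset <;> apply hψmono <;>
          exact Set.union_subset_union_left _ (by intro a ha; first
            | exact hBD (Or.inl ha) | exact hBD (Or.inr ha))
    have hsub : A ∪ {z} ⊆ ⋃₀ S' := by
      apply Set.union_subset
      · rw [hAS]
        rintro a ⟨B, hB, haB⟩
        exact ⟨ψ (B ∪ {z}), ⟨B, hB, rfl⟩, hψext _ (Or.inl haB)⟩
      · obtain ⟨B, hB⟩ := hSne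
        intro a ha
        exact ⟨ψ (B ∪ {z}), ⟨B, hB, rfl⟩, hψext _ (Or.inr ha)⟩
    calc ρ (A ∪ {z}) ⊆ ρ (⋃₀ S') := hρmono _ _ hsub
      _ = ⋃₀ S' := hU
  obtain ⟨_, ⟨B₁, hB₁, rfl⟩, hx⟩ := key y hxρ
  obtain ⟨_, ⟨B₂, hB₂, rfl⟩, hy⟩ := key x hyρ
  obtain ⟨D, hD, hBD⟩ := hSdir B₁ hB₁ B₂ hB₂
  have hxD : x ∈ ψ (D ∪ {y}) :=
    hψmono _ _ (Set.union_subset_union_left _ (fun a ha => hBD (Or.inl ha))) hx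
  have hyD : y ∈ ψ (D ∪ {x}) :=
    hψmono _ _ (Set.union_subset_union_left _ (fun a ha => hBD (Or.inr ha))) hy
  have hxnD : x ∉ D := fun h => hxA (hAS ▸ ⟨D, hD, h⟩)
  exact hψaep x y D hxy (hScl D hD) hxnD hxD hyD
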